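/- Fix α > 0 and d ≥ 1, let ω = (√(α² + 4) − α)/2, q = (2 + α² − α√(α² + 4))/2, let B ∈ ℝ^{d×d} be the lower bidiagonal matrix with B_{ii} = 1 for i = 1,…,d−1, B_{dd} = √(αω), B_{i+1,i} = −1 for i = 1,…,d−1, and all other entries zero, let c = (ω, 0, …, 0)ᵀ, and define H(x, y) = (α/2)‖x‖² + xᵀ(By − c) − (α/2)‖y‖². Then the point x* = (q, q², …, q^d)ᵀ, y* = ω·(q, q², …, q^{d−1}, q^d/√(1−q))ᵀ satisfies ∇_x H(x*, y*) = 0 and ∇_y H(x*, y*) = 0, i.e., (x*, y*) is the saddle point of H on ℝ^d × ℝ^d. -/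

import Mathlib

open scoped RealInnerProductSpace

lemma quad_gradient {E : Type*} [NormedAddCommGroup E] [InnerProductSpace ℝ E] [CompleteSpace E]
    (a C : ℝ) (k x₀ : E) :
    HasGradientAt (fun x => a / 2 * ⟪x, x⟫ + ⟪x, k⟫ - C) ((a • x₀) + k) x₀ := by
  rw [hasGradientAt_iff_hasFDerivAt]
  have h1 := (((hasFDerivAt_id x₀).inner ℝ (hasFDerivAt_id x₀)).const_mul (a/2))
  have h2 := ((hasFDerivAt_id x₀).inner ℝ (hasFDerivAt_const k x₀))
  have h3 := (h1.add h2).sub_const C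
  refine h3.congr_fderiv (Eq.symm ?_)
  apply ContinuousLinearMap.ext
  intro t
  simp [fderivInnerCLM_apply, InnerProductSpace.toDual_apply_apply, inner_add_left,
    real_inner_smul_left, real_inner_comm x₀ t]
  rw [real_inner_comm k t]
  ring

/-- For `α > 0`, `d ≥ 1`, `ω = (√(α²+4) − α)/2`, `q = (2+α²−α√(α²+4))/2`,
with `B`, `c`, `H` as in the hard-instance construction, the point
`x* = (q, q², …, q^d)`, `y* = ω(q, q², …, q^{d−1}, q^d/√(1−q))` satisfies
`∇ₓH(x*, y*) = 0` and `∇_y H(x*, y*) = 0`, i.e. it is the saddle point of `H`. -/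
theorem hard_instance_H_saddle
    {d : ℕ} (hd : 1 ≤ d) (α : ℝ) (hα : 0 < α)
    (ω : ℝ) (hω : ω = (Real.sqrt (α ^ 2 + 4) - α) / 2)
    (q : ℝ) (hq : q = (2 + α ^ 2 - α * Real.sqrt (α ^ 2 + 4)) / 2)
    (B : Fin d → Fin d → ℝ)
    (hB : B = fun (i j : Fin d) =>
      if i = j then (if (i : ℕ) = d - 1 then Real.sqrt (α * ω) else 1)
      else if (i : ℕ) = (j : ℕ) + 1 then -1 else 0)
    (c : Fin d → ℝ) (hc : c = fun (i : Fin d) => if (i : ℕ) = 0 then ω else 0)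
    (H : EuclideanSpace ℝ (Fin d) → EuclideanSpace ℝ (Fin d) → ℝ)
    (hH : H = fun x y =>
      α / 2 * ‖x‖ ^ 2 + (∑ i, x i * ((∑ j, B i j * y j) - c i)) - α / 2 * ‖y‖ ^ 2)
    (xs ys : EuclideanSpace ℝ (Fin d))
    (hxs : xs = fun (i : Fin d) => q ^ ((i : ℕ) + 1))
    (hys : ys = fun (i : Fin d) =>
      ω * (if (i : ℕ) = d - 1 then q ^ d / Real.sqrt (1 - q) else q ^ ((i : ℕ) + 1))) :
    gradient (fun x => H x ys) xs = 0 ∧ gradient (fun y => H xs y) ys = 0 := by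
  -- scalar facts
  have h4 : (0:ℝ) < α ^ 2 + 4 := by positivity
  have hs2 : Real.sqrt (α ^ 2 + 4) ^ 2 = α ^ 2 + 4 := Real.sq_sqrt h4.le
  have hsnn : 0 ≤ Real.sqrt (α ^ 2 + 4) := Real.sqrt_nonneg _
  have hωpos : 0 < ω := by
    rw [hω]
    nlinarith [hs2, hsnn, hα]
  have key : ω ^ 2 + α * ω = 1 := by
    rw [hω]; linear_combination hs2 / 4
  have hqω : q = ω ^ 2 := by
    rw [hq, hω]; linear_combination (-(1:ℝ)/4) * hs2
  have hq1 : 1 - q = α * ω := by rw [hqω]; linarith [key]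
  have hαω : 0 < α * ω := mul_pos hα hωpos
  have hr2 : Real.sqrt (α * ω) ^ 2 = α * ω := Real.sq_sqrt hαω.le
  have hrpos : 0 < Real.sqrt (α * ω) := Real.sqrt_pos.mpr hαω
  set r := Real.sqrt (α * ω) with hrdef
  have hrq : Real.sqrt (1 - q) = r := by rw [hq1]
  have hcore : α * q + ω * q - ω = 0 := by
    rw [hqω]; linear_combination ω * key
  have hrc : ∀ t : ℝ, r * (ω * (t / r)) = ω * t := by
    intro t; field_simp
  have hrc2 : ∀ t : ℝ, α * (ω * (t / r)) = r * t := by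
    intro t
    field_simp
    linear_combination (-t) * hr2
  -- row sums of B
  have hBrow : ∀ (v : Fin d → ℝ) (i : Fin d), (∑ j, B i j * v j) =
      (if (i : ℕ) = d - 1 then r else 1) * v i
        + ∑ j : Fin d, (if (i : ℕ) = (j : ℕ) + 1 then -(v j) else 0) := by
    intro v i
    rw [hB]
    have hpt : ∀ j : Fin d,
        (if i = j then (if (i : ℕ) = d - 1 then r else 1)
          else if (i : ℕ) = (j : ℕ) + 1 then -1 else 0) * v j
        = (if j = i then (if (i : ℕ) = d - 1 then r else 1) * v i else 0)
          + (if (i : ℕ) = (j : ℕ) + 1 then -(v j) else 0) := by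
      intro j
      by_cases hij : i = j
      · subst hij
        rw [if_pos rfl, if_pos rfl, if_neg (by omega : ¬ (i : ℕ) = (i : ℕ) + 1)]
        ring
      · rw [if_neg hij, if_neg (Ne.symm hij)]
        split_ifs <;> ring
    rw [Finset.sum_congr rfl (fun j _ => hpt j), Finset.sum_add_distrib,
      Finset.sum_ite_eq' Finset.univ i, if_pos (Finset.mem_univ i)]
  -- column sums of B
  have hBcol : ∀ (v : Fin d → ℝ) (j : Fin d), (∑ i, B i j * v i) =
      (if (j : ℕ) = d - 1 then r else 1) * v j
        + ∑ i : Fin d, (if (i : ℕ) = (j : ℕ) + 1 then -(v i) else 0) := by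
    intro v j
    rw [hB]
    have hpt : ∀ i : Fin d,
        (if i = j then (if (i : ℕ) = d - 1 then r else 1)
          else if (i : ℕ) = (j : ℕ) + 1 then -1 else 0) * v i
        = (if i = j then (if (j : ℕ) = d - 1 then r else 1) * v j else 0)
          + (if (i : ℕ) = (j : ℕ) + 1 then -(v i) else 0) := by
      intro i
      by_cases hij : i = j
      · subst hij
        rw [if_pos rfl, if_pos rfl, if_neg (by omega : ¬ (i : ℕ) = (i : ℕ) + 1)]
        ring
      · rw [if_neg hij, if_neg hij]
        split_ifs <;> ring
    rw [Finset.sum_congr rfl (fun i _ => hpt i), Finset.sum_add_distrib,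
      Finset.sum_ite_eq' Finset.univ j, if_pos (Finset.mem_univ j)]
  -- row tail sums
  have htail0 : ∀ (v : Fin d → ℝ) (i : Fin d), (i : ℕ) = 0 →
      (∑ j : Fin d, (if (i : ℕ) = (j : ℕ) + 1 then -(v j) else 0)) = 0 := by
    intro v i h0
    apply Finset.sum_eq_zero
    intro j _
    rw [if_neg (by omega)]
  have htail : ∀ (v : Fin d → ℝ) (i : Fin d), (i : ℕ) ≠ 0 →
      (∑ j : Fin d, (if (i : ℕ) = (j : ℕ) + 1 then -(v j) else 0))
        = -(v ⟨(i : ℕ) - 1, by have := i.isLt; omega⟩) := by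
    intro v i h0
    have hlt : (i : ℕ) - 1 < d := by have := i.isLt; omega
    rw [Finset.sum_eq_single (⟨(i : ℕ) - 1, hlt⟩ : Fin d)]
    · rw [if_pos (by simp; omega)]
    · intro j _ hj
      rw [if_neg (by
        intro hcontra
        apply hj
        apply Fin.ext
        simp
        omega)]
    · intro h; exact absurd (Finset.mem_univ _) h
  -- column tail sums
  have hctail0 : ∀ (v : Fin d → ℝ) (j : Fin d), (j : ℕ) = d - 1 →
      (∑ i : Fin d, (if (i : ℕ) = (j : ℕ) + 1 then -(v i) else 0)) = 0 := by
    intro v j hl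
    apply Finset.sum_eq_zero
    intro i _
    rw [if_neg (by have := i.isLt; omega)]
  have hctail : ∀ (v : Fin d → ℝ) (j : Fin d) (hl : (j : ℕ) ≠ d - 1),
      (∑ i : Fin d, (if (i : ℕ) = (j : ℕ) + 1 then -(v i) else 0))
        = -(v ⟨(j : ℕ) + 1, by have := j.isLt; omega⟩) := by
    intro v j hl
    have hlt : (j : ℕ) + 1 < d := by have := j.isLt; omega
    rw [Finset.sum_eq_single (⟨(j : ℕ) + 1, hlt⟩ : Fin d)]
    · rw [if_pos (by simp)]
    · intro i _ hi
      rw [if_neg (by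
        intro hcontra
        apply hi
        apply Fin.ext
        simpa using hcontra)]
    · intro h; exact absurd (Finset.mem_univ _) h
  -- the gradient computations
  have hgx : HasGradientAt (fun x => H x ys)
      ((α • xs) + (WithLp.equiv 2 (Fin d → ℝ)).symm
        (fun i => (∑ j : Fin d, B i j * ys j) - c i)) xs := by
    have hfx : (fun x : EuclideanSpace ℝ (Fin d) => H x ys)
        = fun x => α / 2 * ⟪x, x⟫ + ⟪x, (WithLp.equiv 2 (Fin d → ℝ)).symm
            (fun i => (∑ j : Fin d, B i j * ys j) - c i)⟫ - (α / 2 * ‖ys‖ ^ 2) := by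
      funext x
      have hnx : ‖x‖ ^ 2 = ∑ i : Fin d, x i * x i := by
        rw [← real_inner_self_eq_norm_sq, PiLp.inner_apply]
        simp [RCLike.inner_apply, sq]
      rw [hH]
      simp only [PiLp.inner_apply, RCLike.inner_apply', conj_trivial,
        WithLp.equiv_symm_apply, PiLp.toLp_apply]
      rw [hnx]
    rw [hfx]
    exact quad_gradient α (α / 2 * ‖ys‖ ^ 2) _ xs
  have hgy : HasGradientAt (fun y => H xs y)
      (((-α) • ys) + (WithLp.equiv 2 (Fin d → ℝ)).symm
        (fun j => ∑ i : Fin d, B i j * xs i)) ys := by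
    have hfy : (fun y : EuclideanSpace ℝ (Fin d) => H xs y)
        = fun y => (-α) / 2 * ⟪y, y⟫ + ⟪y, (WithLp.equiv 2 (Fin d → ℝ)).symm
            (fun j => ∑ i : Fin d, B i j * xs i)⟫
          - ((∑ i, xs i * c i) - α / 2 * ‖xs‖ ^ 2) := by
      funext y
      have hny : ‖y‖ ^ 2 = ∑ i : Fin d, y i * y i := by
        rw [← real_inner_self_eq_norm_sq, PiLp.inner_apply]
        simp [RCLike.inner_apply, sq]
      rw [hH]
      simp only [PiLp.inner_apply, RCLike.inner_apply', conj_trivial,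
        WithLp.equiv_symm_apply, PiLp.toLp_apply]
      have hswap : ∑ i, xs i * (∑ j, B i j * y j) = ∑ j, y j * (∑ i, B i j * xs i) := by
        simp_rw [Finset.mul_sum]
        rw [Finset.sum_comm]
        exact Finset.sum_congr rfl fun j _ => Finset.sum_congr rfl fun i _ => by ring
      simp only [mul_sub, Finset.sum_sub_distrib]
      rw [hswap, hny]
      ring
    rw [hfy]
    exact quad_gradient (-α) _ _ ys
  -- the gradients vanish
  have hx0 : (α • xs) + (WithLp.equiv 2 (Fin d → ℝ)).symm
      (fun i => (∑ j : Fin d, B i j * ys j) - c i) = 0 := by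
    ext i
    show α * xs i + ((∑ j : Fin d, B i j * ys j) - c i) = 0
    rw [hBrow ys i]
    have hilt := i.isLt
    by_cases h0 : (i : ℕ) = 0
    · rw [htail0 ys i h0]
      by_cases hl : (i : ℕ) = d - 1
      · have hd1 : d = 1 := by omega
        simp only [hxs, hys, hc, hrq, hl, h0, hd1, if_true, eq_self_iff_true]
        rw [hrc]
        linear_combination hcore
      · simp only [hxs, hys, hc, if_neg hl, if_pos h0]
        rw [h0]
        linear_combination hcore
    · rw [htail ys i h0]
      by_cases hl : (i : ℕ) = d - 1
      · simp only [hxs, hys, hc, hrq, if_pos hl, if_neg h0]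
        rw [hrc, if_neg (by omega : ¬ ((i : ℕ) - 1 = d - 1))]
        rw [show (i : ℕ) + 1 = d by omega, show (i : ℕ) - 1 + 1 = d - 1 by omega,
          show q ^ d = q ^ (d - 1) * q by rw [← pow_succ]; congr 1; omega]
        linear_combination q ^ (d - 1) * hcore
      · simp only [hxs, hys, hc, if_neg hl, if_neg h0]
        rw [if_neg (by omega : ¬ ((i : ℕ) - 1 = d - 1)),
          show (i : ℕ) - 1 + 1 = (i : ℕ) by omega]
        linear_combination q ^ (i : ℕ) * hcore
  have hy0 : ((-α) • ys) + (WithLp.equiv 2 (Fin d → ℝ)).symm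
      (fun j => ∑ i : Fin d, B i j * xs i) = 0 := by
    ext j
    show (-α) * ys j + (∑ i : Fin d, B i j * xs i) = 0
    rw [hBcol xs j]
    have hjlt := j.isLt
    by_cases hl : (j : ℕ) = d - 1
    · rw [hctail0 xs j hl]
      simp only [hxs, hys, hrq, if_pos hl]
      rw [show (j : ℕ) + 1 = d by omega]
      have := hrc2 (q ^ d)
      linarith [this]
    · rw [hctail xs j hl]
      simp only [hxs, hys, if_neg hl]
      linear_combination q ^ ((j : ℕ) + 1) * hq1
  constructor
  · rw [hgx.gradient]; exact hx0
  · rw [hgy.gradient]; exact hy0
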